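/- Let A and B be nonnegative selfadjoint bounded linear operators on a complex Hilbert space and let r ∈ (0, 1] be a real number. Then ‖A^r B^r‖ ≤ ‖A B‖^r (Cordes inequality). -/

import Mathlib

open scoped NNReal ENNReal

section CordesAux

lemma my_spectralRadius_mul_comm {𝕜 A : Type*} [NormedField 𝕜] [NormedRing A] [NormedAlgebra 𝕜 A]
    (a b : A) : spectralRadius 𝕜 (a * b) = spectralRadius 𝕜 (b * a) := by
  have key : ∀ x y : A, spectralRadius 𝕜 (x * y) ≤ spectralRadius 𝕜 (y * x) := by
    intro x y
    rw [spectralRadius, spectralRadius]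
    refine iSup₂_le fun k hk => ?_
    rcases eq_or_ne k 0 with rfl | h
    · simp
    · have hk' : k ∈ spectrum 𝕜 (y * x) := by
        have h2 := spectrum.nonzero_mul_comm (𝕜 := 𝕜) x y
        have hmem : k ∈ spectrum 𝕜 (x * y) \ {0} := ⟨hk, h⟩
        rw [h2] at hmem
        exact hmem.1
      exact le_iSup₂ (f := fun k (_ : k ∈ spectrum 𝕜 (y * x)) => (‖k‖₊ : ℝ≥0∞)) k hk'
  exact le_antisymm (key a b) (key b a)

variable {H : Type*} [NormedAddCommGroup H] [InnerProductSpace ℂ H] [CompleteSpace H]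

lemma my_cfc_rpow_add (a : H →L[ℂ] H) (ha : 0 ≤ a) {x y : ℝ} (hx : 0 ≤ x) (hy : 0 ≤ y)
    (h : x + y ≠ 0) :
    CFC.rpow a (x + y) = CFC.rpow a x * CFC.rpow a y := by
  simp only [CFC.rpow]
  rw [← cfc_mul _ _ a ((NNReal.continuous_rpow_const hx).continuousOn)
    ((NNReal.continuous_rpow_const hy).continuousOn)]
  exact cfc_congr fun z _ => NNReal.rpow_add' h z

lemma my_nnnorm_swap (a b : H →L[ℂ] H) (ha : 0 ≤ a) (hb : 0 ≤ b) :
    ‖b * a‖₊ = ‖a * b‖₊ := by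
  conv_lhs => rw [← nnnorm_star]
  rw [star_mul, (IsSelfAdjoint.of_nonneg ha).star_eq, (IsSelfAdjoint.of_nonneg hb).star_eq]

lemma my_midpoint [Nontrivial H] (A B : H →L[ℂ] H) (hA0 : 0 ≤ A) (hB0 : 0 ≤ B) {α β : ℝ}
    (hα : 0 ≤ α) (hβ : 0 ≤ β) (hαβ : 0 < α + β) :
    ‖CFC.rpow A ((α + β) / 2) * CFC.rpow B ((α + β) / 2)‖₊ ^ 2
      ≤ ‖CFC.rpow A α * CFC.rpow B α‖₊ * ‖CFC.rpow A β * CFC.rpow B β‖₊ := by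
  set m : ℝ := (α + β) / 2 with hm_def
  set a := CFC.rpow A m with ha_def
  set b := CFC.rpow B m with hb_def
  have ha : (0 : H →L[ℂ] H) ≤ a := CFC.rpow_nonneg
  have hb : (0 : H →L[ℂ] H) ≤ b := CFC.rpow_nonneg
  have hm : 0 < m := by positivity
  have hsm : star (a * b) * (a * b) = b * (a * (a * b)) := by
    rw [star_mul, (IsSelfAdjoint.of_nonneg ha).star_eq, (IsSelfAdjoint.of_nonneg hb).star_eq]
    simp only [mul_assoc]
  have h1 : ‖a * b‖₊ ^ 2 = ‖b * (a * (a * b))‖₊ := by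
    rw [pow_two, ← CStarRing.nnnorm_star_mul_self (x := a * b), hsm]
  have hpos : (0 : H →L[ℂ] H) ≤ b * (a * (a * b)) := hsm ▸ star_mul_self_nonneg (a * b)
  have h2 : spectralRadius ℂ (b * (a * (a * b))) = (‖b * (a * (a * b))‖₊ : ℝ≥0∞) :=
    (IsSelfAdjoint.of_nonneg hpos).spectralRadius_eq_nnnorm
  have haa : a * a = CFC.rpow A (α + β) := by
    rw [ha_def, ← my_cfc_rpow_add A hA0 (x := m) (y := m) hm.le hm.le (by positivity)]
    congr 1
    rw [hm_def]; ring
  have hbb : b * b = CFC.rpow B (α + β) := by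
    rw [hb_def, ← my_cfc_rpow_add B hB0 (x := m) (y := m) hm.le hm.le (by positivity)]
    congr 1
    rw [hm_def]; ring
  have h3 : spectralRadius ℂ (b * (a * (a * b)))
      = spectralRadius ℂ (CFC.rpow A (α + β) * CFC.rpow B (α + β)) := by
    rw [my_spectralRadius_mul_comm]
    congr 1
    rw [← haa, ← hbb]
    simp only [mul_assoc]
  have hsplitA : CFC.rpow A (α + β) = CFC.rpow A α * CFC.rpow A β :=
    my_cfc_rpow_add A hA0 hα hβ hαβ.ne'
  have hsplitB : CFC.rpow B (α + β) = CFC.rpow B β * CFC.rpow B α := by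
    rw [show α + β = β + α from add_comm α β]
    exact my_cfc_rpow_add B hB0 hβ hα (by rw [add_comm]; exact hαβ.ne')
  have h4 : spectralRadius ℂ (CFC.rpow A (α + β) * CFC.rpow B (α + β))
      = spectralRadius ℂ ((CFC.rpow A β * CFC.rpow B β) * (CFC.rpow B α * CFC.rpow A α)) := by
    rw [hsplitA, hsplitB, mul_assoc, my_spectralRadius_mul_comm]
    congr 1 <;> simp only [mul_assoc]
  have h5 : spectralRadius ℂ ((CFC.rpow A β * CFC.rpow B β) * (CFC.rpow B α * CFC.rpow A α))
      ≤ ((‖CFC.rpow A α * CFC.rpow B α‖₊ * ‖CFC.rpow A β * CFC.rpow B β‖₊ : ℝ≥0) : ℝ≥0∞) := by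
    refine (spectrum.spectralRadius_le_nnnorm _).trans ?_
    refine ENNReal.coe_le_coe.mpr ?_
    calc ‖(CFC.rpow A β * CFC.rpow B β) * (CFC.rpow B α * CFC.rpow A α)‖₊
        ≤ ‖CFC.rpow A β * CFC.rpow B β‖₊ * ‖CFC.rpow B α * CFC.rpow A α‖₊ := nnnorm_mul_le _ _
      _ = ‖CFC.rpow A α * CFC.rpow B α‖₊ * ‖CFC.rpow A β * CFC.rpow B β‖₊ := by
          rw [my_nnnorm_swap (CFC.rpow A α) (CFC.rpow B α) CFC.rpow_nonneg CFC.rpow_nonneg,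
            mul_comm]
  have hfinal : ((‖a * b‖₊ ^ 2 : ℝ≥0) : ℝ≥0∞)
      ≤ ((‖CFC.rpow A α * CFC.rpow B α‖₊ * ‖CFC.rpow A β * CFC.rpow B β‖₊ : ℝ≥0) : ℝ≥0∞) := by
    calc ((‖a * b‖₊ ^ 2 : ℝ≥0) : ℝ≥0∞) = (‖b * (a * (a * b))‖₊ : ℝ≥0∞) := by rw [h1]
      _ = spectralRadius ℂ (b * (a * (a * b))) := h2.symm
      _ = _ := h3.trans h4
      _ ≤ _ := h5
  exact_mod_cast hfinal

lemma my_rpow_continuousAt [Nontrivial H] (A : H →L[ℂ] H) (hA0 : 0 ≤ A) {r : ℝ} (hr : 0 < r) :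
    ContinuousAt (fun t : ℝ => CFC.rpow A t) r := by
  rw [Metric.continuousAt_iff]
  intro ε hε
  set M : ℝ≥0 := ‖A‖₊ with hM
  set K : Set (ℝ≥0 × ℝ) := Set.Icc 0 M ×ˢ Set.Icc (r / 2) (r + 1) with hK
  have hKc : IsCompact K := (isCompact_Icc).prod isCompact_Icc
  have hcont : ContinuousOn (fun p : ℝ≥0 × ℝ => p.1 ^ p.2) K := by
    intro p hp
    have hp2 : 0 < p.2 := lt_of_lt_of_le (by positivity) hp.2.1
    exact (NNReal.continuousAt_rpow (Or.inr hp2)).continuousWithinAt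
  have huc := hKc.uniformContinuousOn_of_continuous hcont
  rw [Metric.uniformContinuousOn_iff] at huc
  obtain ⟨δ, hδ, hδ'⟩ := huc (ε / 2) (by positivity)
  refine ⟨min δ (min (r / 2) 1), by positivity, fun {t} ht => ?_⟩
  have ht1 : |t - r| < δ := by
    rw [Real.dist_eq] at ht; exact lt_of_lt_of_le ht (min_le_left _ _)
  have ht2 : t ∈ Set.Icc (r / 2) (r + 1) := by
    rw [Real.dist_eq] at ht
    have h2 := lt_of_lt_of_le ht (min_le_right _ _)
    have h3 := lt_of_lt_of_le h2 (min_le_left _ _)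
    have h4 := lt_of_lt_of_le h2 (min_le_right _ _)
    rw [abs_lt] at h3 h4
    constructor <;> linarith [h3.1, h4.2]
  have ht0 : (0:ℝ) ≤ t := le_trans (by positivity) ht2.1
  have hrepr : ∀ s : ℝ, 0 ≤ s → CFC.rpow A s
      = cfc (fun x : ℝ => ((x.toNNReal ^ s : ℝ≥0) : ℝ)) A := fun s _ =>
    cfc_nnreal_eq_real (fun x : ℝ≥0 => x ^ s) A hA0
  have fonA : ContinuousOn (fun x : ℝ => ((x.toNNReal ^ t : ℝ≥0) : ℝ)) (spectrum ℝ A) :=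
    (NNReal.continuous_coe.comp ((NNReal.continuous_rpow_const ht0).comp
      continuous_real_toNNReal)).continuousOn
  have fonB : ContinuousOn (fun x : ℝ => ((x.toNNReal ^ r : ℝ≥0) : ℝ)) (spectrum ℝ A) :=
    (NNReal.continuous_coe.comp ((NNReal.continuous_rpow_const hr.le).comp
      continuous_real_toNNReal)).continuousOn
  have hsub : CFC.rpow A t - CFC.rpow A r
      = cfc (fun x : ℝ => ((x.toNNReal ^ t : ℝ≥0) : ℝ) - ((x.toNNReal ^ r : ℝ≥0) : ℝ)) A := by
    rw [hrepr t ht0, hrepr r hr.le,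
      ← cfc_sub (fun x : ℝ => ((x.toNNReal ^ t : ℝ≥0) : ℝ))
        (fun x : ℝ => ((x.toNNReal ^ r : ℝ≥0) : ℝ)) A fonA fonB]
  rw [dist_eq_norm, hsub]
  have hbound : ‖cfc (fun x : ℝ => ((x.toNNReal ^ t : ℝ≥0) : ℝ) - ((x.toNNReal ^ r : ℝ≥0) : ℝ)) A‖
      ≤ ε / 2 := by
    refine norm_cfc_le (by positivity) fun x hx => ?_
    have hxM : x.toNNReal ≤ M := by
      have hxn : ‖x‖ ≤ ‖A‖ := spectrum.norm_le_norm_of_mem hx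
      have hxle : x ≤ ‖A‖ := le_trans (le_abs_self x) hxn
      exact Real.toNNReal_le_iff_le_coe.mpr hxle
    have hp : (x.toNNReal, t) ∈ K := ⟨⟨zero_le, hxM⟩, ht2⟩
    have hq : (x.toNNReal, r) ∈ K := ⟨⟨zero_le, hxM⟩, ⟨by linarith, by linarith⟩⟩
    have hd : dist ((x.toNNReal, t) : ℝ≥0 × ℝ) (x.toNNReal, r) < δ := by
      rw [Prod.dist_eq]
      simp only [dist_self, Real.dist_eq]
      rw [max_eq_right (abs_nonneg _)]
      exact ht1
    have := hδ' _ hp _ hq hd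
    rw [NNReal.dist_eq] at this
    exact le_of_lt (by simpa using this)
  exact lt_of_le_of_lt hbound (by linarith)

lemma my_dyadic [Nontrivial H] (A B : H →L[ℂ] H) (hA0 : 0 ≤ A) (hB0 : 0 ≤ B)
    (d : ℝ≥0) (hd : d ≠ 0) (hc : ‖A * B‖₊ ≤ d) :
    ∀ n k : ℕ, k ≤ 2 ^ n →
      ‖CFC.rpow A ((k : ℝ) / 2 ^ n) * CFC.rpow B ((k : ℝ) / 2 ^ n)‖₊ ≤ d ^ ((k : ℝ) / 2 ^ n) := by
  intro n
  induction n with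
  | zero =>
    intro k hk
    interval_cases k
    · simp only [Nat.cast_zero, pow_zero, zero_div]
      rw [show CFC.rpow A (0:ℝ) = 1 from CFC.rpow_zero A hA0,
        show CFC.rpow B (0:ℝ) = 1 from CFC.rpow_zero B hB0,
        NNReal.rpow_zero, one_mul, nnnorm_one]
    · simp only [Nat.cast_one, pow_zero, div_one]
      rw [show CFC.rpow A (1:ℝ) = A from CFC.rpow_one A hA0,
        show CFC.rpow B (1:ℝ) = B from CFC.rpow_one B hB0, NNReal.rpow_one]
      exact hc
  | succ n ih =>
    intro k hk
    rcases Nat.even_or_odd k with ⟨j, hj⟩ | ⟨j, hj⟩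
    · have hj' : j ≤ 2 ^ n := by omega
      have heq : (k : ℝ) / 2 ^ (n + 1) = (j : ℝ) / 2 ^ n := by
        subst hj; push_cast; ring
      rw [heq]
      exact ih j hj'
    · have hj' : j + 1 ≤ 2 ^ n := by omega
      set α : ℝ := (j : ℝ) / 2 ^ n with hα_def
      set β : ℝ := ((j + 1 : ℕ) : ℝ) / 2 ^ n with hβ_def
      have hα : 0 ≤ α := by positivity
      have hβpos : 0 < β := by rw [hβ_def]; positivity
      have hαβ : 0 < α + β := by linarith
      have heq : (k : ℝ) / 2 ^ (n + 1) = (α + β) / 2 := by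
        subst hj; rw [hα_def, hβ_def]; push_cast; ring
      rw [heq]
      have hmid := my_midpoint A B hA0 hB0 hα hβpos.le hαβ
      have hIH := mul_le_mul' (ih j (by omega)) (ih (j + 1) hj')
      have hcomb : ‖CFC.rpow A ((α + β) / 2) * CFC.rpow B ((α + β) / 2)‖₊ ^ 2
          ≤ (d ^ ((α + β) / 2)) ^ 2 := by
        refine hmid.trans (hIH.trans ?_)
        rw [pow_two, ← NNReal.rpow_add hd, ← NNReal.rpow_add hd]
        apply le_of_eq
        congr 1
        ring
      exact le_of_pow_le_pow_left₀ two_ne_zero zero_le hcomb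

lemma my_fixed_d [Nontrivial H] (A B : H →L[ℂ] H) (hA0 : 0 ≤ A) (hB0 : 0 ≤ B)
    (d : ℝ≥0) (hd : d ≠ 0) (hc : ‖A * B‖₊ ≤ d) {r : ℝ} (hr0 : 0 < r) (hr1 : r ≤ 1) :
    ‖CFC.rpow A r * CFC.rpow B r‖₊ ≤ d ^ r := by
  set q : ℕ → ℝ := fun n => ((⌈r * 2 ^ n⌉₊ : ℝ) / 2 ^ n) with hq_def
  have hq1 : ∀ n, r ≤ q n := by
    intro n
    rw [hq_def]
    rw [le_div_iff₀ (by positivity)]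
    exact Nat.le_ceil _
  have hq2 : ∀ n, q n ≤ r + (1 / 2 : ℝ) ^ n := by
    intro n
    rw [hq_def]
    rw [div_le_iff₀ (by positivity)]
    have h1 : (⌈r * 2 ^ n⌉₊ : ℝ) < r * 2 ^ n + 1 := Nat.ceil_lt_add_one (by positivity)
    have h2 : (r + (1 / 2 : ℝ) ^ n) * 2 ^ n = r * 2 ^ n + 1 := by
      rw [add_mul, div_pow, one_pow, div_mul_cancel₀]
      positivity
    linarith
  have hqk : ∀ n, ⌈r * 2 ^ n⌉₊ ≤ 2 ^ n := by
    intro n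
    rw [Nat.ceil_le]
    push_cast
    nlinarith [pow_pos (by norm_num : (0:ℝ) < 2) n]
  have htend : Filter.Tendsto q Filter.atTop (nhds r) := by
    have hupper : Filter.Tendsto (fun n : ℕ => r + (1 / 2 : ℝ) ^ n) Filter.atTop (nhds r) := by
      have := tendsto_pow_atTop_nhds_zero_of_lt_one (by norm_num : (0:ℝ) ≤ 1/2)
        (by norm_num : (1/2:ℝ) < 1)
      simpa using Filter.Tendsto.const_add r this
    exact tendsto_of_tendsto_of_tendsto_of_le_of_le tendsto_const_nhds hupper hq1 hq2
  have hFr : ContinuousAt (fun t : ℝ => ‖CFC.rpow A t * CFC.rpow B t‖₊) r :=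
    continuous_nnnorm.continuousAt.comp
      ((my_rpow_continuousAt A hA0 hr0).mul (my_rpow_continuousAt B hB0 hr0))
  have hFtend : Filter.Tendsto (fun n => ‖CFC.rpow A (q n) * CFC.rpow B (q n)‖₊)
      Filter.atTop (nhds ‖CFC.rpow A r * CFC.rpow B r‖₊) := hFr.tendsto.comp htend
  have hdtend : Filter.Tendsto (fun n => d ^ (q n)) Filter.atTop (nhds (d ^ r)) := by
    have hjoint : ContinuousAt (fun p : ℝ≥0 × ℝ => p.1 ^ p.2) (d, r) :=
      NNReal.continuousAt_rpow (Or.inl hd)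
    exact hjoint.tendsto.comp (Filter.Tendsto.prodMk_nhds tendsto_const_nhds htend)
  refine le_of_tendsto_of_tendsto' hFtend hdtend fun n => ?_
  exact my_dyadic A B hA0 hB0 d hd hc n _ (hqk n)

end CordesAux

/-- **Cordes inequality**: for nonnegative selfadjoint bounded operators `A, B` on a
complex Hilbert space and any real `r ∈ (0, 1]`, `‖A^r B^r‖ ≤ ‖A B‖^r`. -/
theorem norm_rpow_mul_rpow_le
    {H : Type*} [NormedAddCommGroup H] [InnerProductSpace ℂ H] [CompleteSpace H]
    (A B : H →L[ℂ] H) (hA : IsSelfAdjoint A) (hB : IsSelfAdjoint B)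
    (hA0 : 0 ≤ A) (hB0 : 0 ≤ B)
    (r : ℝ) (hr0 : 0 < r) (hr1 : r ≤ 1) :
    ‖CFC.rpow A r * CFC.rpow B r‖ ≤ ‖A * B‖ ^ r := by
  rcases subsingleton_or_nontrivial H with hH | hH
  · have h1 : CFC.rpow A r * CFC.rpow B r = 0 := Subsingleton.elim _ _
    have h2 : A * B = 0 := Subsingleton.elim _ _
    rw [h1, h2]
    simp [Real.zero_rpow hr0.ne']
  · set c : ℝ≥0 := ‖A * B‖₊ with hc_def
    have key : ∀ n : ℕ, ‖CFC.rpow A r * CFC.rpow B r‖₊ ≤ (c + 1 / (n + 1)) ^ r := by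
      intro n
      refine my_fixed_d A B hA0 hB0 (c + 1 / (n + 1)) ?_ ?_ hr0 hr1
      · have h0 : (0 : ℝ≥0) < 1 / (n + 1) := by positivity
        positivity
      · exact le_add_of_nonneg_right zero_le
    have keyR : ∀ n : ℕ, ‖CFC.rpow A r * CFC.rpow B r‖ ≤ ((c : ℝ) + 1 / ((n : ℝ) + 1)) ^ r := by
      intro n
      have hcoe := NNReal.coe_le_coe.mpr (key n)
      rw [NNReal.coe_rpow] at hcoe
      calc ‖CFC.rpow A r * CFC.rpow B r‖
          = (‖CFC.rpow A r * CFC.rpow B r‖₊ : ℝ) := (coe_nnnorm _).symm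
        _ ≤ (((c + 1 / (n + 1)) : ℝ≥0) : ℝ) ^ r := hcoe
        _ = ((c : ℝ) + 1 / ((n : ℝ) + 1)) ^ r := by push_cast; norm_num
    have htend : Filter.Tendsto (fun n : ℕ => ((c : ℝ) + 1 / ((n : ℝ) + 1)) ^ r)
        Filter.atTop (nhds ((c : ℝ) ^ r)) := by
      have hbase : Filter.Tendsto (fun n : ℕ => (c : ℝ) + 1 / ((n : ℝ) + 1))
          Filter.atTop (nhds (c : ℝ)) := by
        have h1 := tendsto_one_div_add_atTop_nhds_zero_nat (𝕜 := ℝ)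
        simpa using Filter.Tendsto.const_add (c : ℝ) h1
      have hca : ContinuousAt (fun x : ℝ => x ^ r) (c : ℝ) :=
        Real.continuousAt_rpow_const _ _ (Or.inr hr0.le)
      exact hca.tendsto.comp hbase
    have hfin := ge_of_tendsto' htend keyR
    calc ‖CFC.rpow A r * CFC.rpow B r‖ ≤ (c : ℝ) ^ r := hfin
      _ = ‖A * B‖ ^ r := by rw [hc_def, coe_nnnorm]
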